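/- Let q be a prime power and d a divisor of q−1. Let h(x) = Σ_{i=1}^{t} c_i x^{e_i} ∈ F_q[x] be a t-sparse polynomial, and suppose there exist integers a_i, b_i with e_i = a_i·(q−1)/d + b_i and −(q−1)/d < b_i < (q−1)/d for all i. Let A ≤ B be integers with all b_i ∈ [A, B]. If h does not vanish identically on any coset of the subgroup of d-th powers (F_q^*)^d in F_q^*, then the number of distinct roots of h in F_q^* is at most d(B − A). -/

import Mathlib

open Polynomial

theorem stmt_12 {F : Type*} [Field F] [Fintype F] [DecidableEq F]
    (d : ℕ) (hd0 : 0 < d) (hd : d ∣ Fintype.card F - 1)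
    (t : ℕ) (c : ℕ → F) (e : ℕ → ℕ)
    (h : F[X]) (hh : h = ∑ i ∈ Finset.range t, C (c i) * X ^ (e i))
    (a b : ℕ → ℤ) (A B : ℤ) (hAB : A ≤ B)
    (hab : ∀ i < t, (e i : ℤ) = a i * (((Fintype.card F - 1) / d : ℕ) : ℤ) + b i)
    (hblb : ∀ i < t, -((((Fintype.card F - 1) / d : ℕ) : ℤ)) < b i)
    (hbub : ∀ i < t, b i < (((Fintype.card F - 1) / d : ℕ) : ℤ))
    (hA : ∀ i < t, A ≤ b i) (hB : ∀ i < t, b i ≤ B)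
    (hnv : ∀ x₀ : F, x₀ ≠ 0 → ∃ y : F, y ≠ 0 ∧ h.eval (x₀ * y ^ d) ≠ 0) :
    ((Finset.univ.filter (fun x : F => x ≠ 0 ∧ h.eval x = 0)).card : ℤ)
      ≤ d * (B - A) := by
  classical
  set q := Fintype.card F with hq
  set m : ℕ := (q - 1) / d with hm
  have hdm : d * m = q - 1 := Nat.mul_div_cancel' hd
  have hpow : ∀ x : F, x ≠ 0 → x ^ (q - 1) = 1 := fun x hx =>
    FiniteField.pow_card_sub_one_eq_one x hx
  set g : F → F[X] := fun x₀ =>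
    ∑ i ∈ Finset.range t, C (c i * x₀ ^ e i) * X ^ ((b i - A).toNat) with hg
  have key : ∀ x₀ y : F, y ≠ 0 → y ^ m = 1 →
      h.eval (x₀ * y) = y ^ (A : ℤ) * (g x₀).eval y := by
    intro x₀ y hy hym
    rw [hh, hg]
    simp only [eval_finset_sum, eval_mul, eval_C, eval_pow, eval_X, Finset.mul_sum]
    refine Finset.sum_congr rfl fun i hi => ?_
    have hit : i < t := Finset.mem_range.mp hi
    have hbA : (0:ℤ) ≤ b i - A := by linarith [hA i hit]
    have h1 : y ^ (e i) = y ^ (b i) := by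
      rw [← zpow_natCast y (e i), hab i hit, zpow_add₀ hy, mul_comm (a i),
        zpow_mul, zpow_natCast, hym, one_zpow, one_mul]
    have h2 : y ^ ((b i - A).toNat) = y ^ (b i - A) := by
      rw [← zpow_natCast y ((b i - A).toNat), Int.toNat_of_nonneg hbA]
    have h3 : y ^ (b i) = y ^ (A : ℤ) * y ^ (b i - A) := by
      rw [← zpow_add₀ hy]; congr 1; ring
    rw [mul_pow, h1, h3, ← h2]; ring
  have hgne : ∀ x₀ : F, x₀ ≠ 0 → g x₀ ≠ 0 := by
    intro x₀ hx₀
    obtain ⟨y', hy', hne⟩ := hnv x₀ hx₀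
    have hyd : y' ^ d ≠ 0 := pow_ne_zero _ hy'
    have hym : (y' ^ d) ^ m = 1 := by
      rw [← pow_mul, hdm]; exact hpow y' hy'
    intro h0
    apply hne
    rw [key x₀ (y' ^ d) hyd hym, h0, eval_zero, mul_zero]
  have hdeg : ∀ x₀ : F, (g x₀).natDegree ≤ (B - A).toNat := by
    intro x₀
    refine Polynomial.natDegree_sum_le_of_forall_le _ _ fun i hi => ?_
    have hit := Finset.mem_range.mp hi
    refine (Polynomial.natDegree_C_mul_le _ _).trans ?_
    rw [Polynomial.natDegree_X_pow]
    have h1 := hA i hit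
    have h2 := hB i hit
    omega
  set S := Finset.univ.filter (fun x : F => x ≠ 0 ∧ h.eval x = 0) with hS
  have hc : S.card = ∑ v ∈ S.image (fun x => x ^ m),
      (S.filter (fun x => x ^ m = v)).card :=
    Finset.card_eq_sum_card_fiberwise fun x hx => Finset.mem_image_of_mem _ hx
  have hfib : ∀ v ∈ S.image (fun x => x ^ m),
      (S.filter (fun x => x ^ m = v)).card ≤ (B - A).toNat := by
    intro v hv
    obtain ⟨x₀, hx₀S, rfl⟩ := Finset.mem_image.mp hv
    have hx₀ : x₀ ≠ 0 := ((Finset.mem_filter.mp hx₀S).2).1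
    have hbound : (S.filter (fun x => x ^ m = x₀ ^ m)).card
        ≤ (g x₀).roots.toFinset.card := by
      apply Finset.card_le_card_of_injOn (fun x => x * x₀⁻¹)
      · intro x hx
        simp only [Finset.mem_coe, hS, Finset.mem_filter, Finset.mem_univ, true_and] at hx
        obtain ⟨⟨hxne, hxz⟩, hxm⟩ := hx
        have hy : x * x₀⁻¹ ≠ 0 := mul_ne_zero hxne (inv_ne_zero hx₀)
        have hym : (x * x₀⁻¹) ^ m = 1 := by
          rw [mul_pow, inv_pow, hxm, mul_inv_cancel₀ (pow_ne_zero _ hx₀)]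
        have hxy : x₀ * (x * x₀⁻¹) = x := by
          field_simp
        have := key x₀ (x * x₀⁻¹) hy hym
        rw [hxy, hxz] at this
        have heval : (g x₀).eval (x * x₀⁻¹) = 0 := by
          have hzA : (x * x₀⁻¹) ^ (A : ℤ) ≠ 0 := zpow_ne_zero _ hy
          exact (mul_eq_zero.mp this.symm).resolve_left hzA
        show x * x₀⁻¹ ∈ (g x₀).roots.toFinset
        rw [Multiset.mem_toFinset, Polynomial.mem_roots (hgne x₀ hx₀)]
        exact heval
      · intro x _ y _ hxy
        exact mul_left_injective₀ (inv_ne_zero hx₀) hxy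
    refine hbound.trans ?_
    refine (Multiset.toFinset_card_le _).trans ?_
    exact (Polynomial.card_roots' _).trans (hdeg x₀)
  have himg : (S.image (fun x => x ^ m)).card ≤ d := by
    calc (S.image (fun x => x ^ m)).card
        ≤ (Polynomial.nthRoots d (1:F)).toFinset.card := by
          apply Finset.card_le_card
          intro v hv
          obtain ⟨x, hxS, rfl⟩ := Finset.mem_image.mp hv
          have hx : x ≠ 0 := ((Finset.mem_filter.mp hxS).2).1
          rw [Multiset.mem_toFinset, Polynomial.mem_nthRoots hd0, ← pow_mul,
            mul_comm m d, hdm]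
          exact hpow x hx
      _ ≤ d := (Multiset.toFinset_card_le _).trans (Polynomial.card_nthRoots d 1)
  have hmain : S.card ≤ d * (B - A).toNat := by
    calc S.card = _ := hc
      _ ≤ ∑ _v ∈ S.image (fun x => x ^ m), (B - A).toNat := Finset.sum_le_sum hfib
      _ = (S.image (fun x => x ^ m)).card * (B - A).toNat := by
          rw [Finset.sum_const, smul_eq_mul]
      _ ≤ d * (B - A).toNat := Nat.mul_le_mul_right _ himg
  have hBA : (0:ℤ) ≤ B - A := by linarith
  calc ((S.card : ℤ)) ≤ ((d * (B - A).toNat : ℕ) : ℤ) := by exact_mod_cast hmain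
    _ = d * (B - A) := by push_cast [Int.toNat_of_nonneg hBA]; ring
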